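/- The function g(x) := x·(3 + tan²x)/tan x is strictly monotone increasing on the interval (0, π/3], and g(x) tends to 3 as x → 0⁺. -/

import Mathlib

open Real Filter Topology

noncomputable def hfun (u : ℝ) : ℝ := (2 + Real.cos u) * Real.sin u - u * (1 + 2 * Real.cos u)

lemma hfun_deriv (u : ℝ) : HasDerivAt hfun (2 * Real.sin u * (u - Real.sin u)) u := by
  have h1 : HasDerivAt (fun u => (2 + Real.cos u) * Real.sin u)
      ((-Real.sin u) * Real.sin u + (2 + Real.cos u) * Real.cos u) u :=
    (((Real.hasDerivAt_cos u).const_add 2)).mul (Real.hasDerivAt_sin u)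
  have h2 : HasDerivAt (fun u => u * (1 + 2 * Real.cos u))
      (1 * (1 + 2 * Real.cos u) + u * (2 * (-Real.sin u))) u :=
    (hasDerivAt_id u).mul (((Real.hasDerivAt_cos u).const_mul 2).const_add 1)
  have := h1.sub h2
  convert this using 1
  · rfl
  · rfl
  · rfl
  have := Real.sin_sq_add_cos_sq u
  nlinarith [this]

lemma key {u : ℝ} (hu : u ∈ Set.Ioc 0 (2 * π / 3)) : 0 < hfun u := by
  have hpi := Real.pi_pos
  have hmono : StrictMonoOn hfun (Set.Icc 0 (2 * π / 3)) := by
    apply strictMonoOn_of_deriv_pos (convex_Icc _ _)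
    · unfold hfun; fun_prop
    · intro x hx
      rw [interior_Icc] at hx
      rw [(hfun_deriv x).deriv]
      have hs : 0 < Real.sin x := Real.sin_pos_of_pos_of_lt_pi hx.1 (by linarith [hx.2])
      have hlt := Real.sin_lt hx.1
      have : 0 < x - Real.sin x := by linarith
      positivity
  have h0 : hfun 0 = 0 := by simp [hfun]
  have := hmono (Set.mem_Icc.mpr ⟨le_refl 0, by linarith⟩)
    (Set.mem_Icc.mpr ⟨hu.1.le, hu.2⟩) hu.1
  linarith

noncomputable def phi (x : ℝ) : ℝ := 2 * x * (2 + Real.cos (2 * x)) / Real.sin (2 * x)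

lemma phi_deriv {x : ℝ} (hs : Real.sin (2 * x) ≠ 0) :
    HasDerivAt phi
      (((2 * (2 + Real.cos (2 * x)) + 2 * x * (-Real.sin (2 * x) * 2)) * Real.sin (2 * x)
        - 2 * x * (2 + Real.cos (2 * x)) * (Real.cos (2 * x) * 2)) / Real.sin (2 * x) ^ 2) x := by
  have h2x : HasDerivAt (fun x : ℝ => 2 * x) 2 x := by
    simpa using (hasDerivAt_id x).const_mul 2
  have hc : HasDerivAt (fun x : ℝ => 2 + Real.cos (2 * x)) (-Real.sin (2 * x) * 2) x :=
    (h2x.cos).const_add 2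
  have hN : HasDerivAt (fun x : ℝ => 2 * x * (2 + Real.cos (2 * x)))
      (2 * (2 + Real.cos (2 * x)) + 2 * x * (-Real.sin (2 * x) * 2)) x := h2x.mul hc
  have hD : HasDerivAt (fun x : ℝ => Real.sin (2 * x)) (Real.cos (2 * x) * 2) x := h2x.sin
  exact hN.div hD hs

lemma sin2x_pos {x : ℝ} (hx : x ∈ Set.Ioc 0 (π / 3)) : 0 < Real.sin (2 * x) := by
  have hpi := Real.pi_pos
  exact Real.sin_pos_of_pos_of_lt_pi (by linarith [hx.1]) (by linarith [hx.2])

lemma phi_mono : StrictMonoOn phi (Set.Ioc 0 (π / 3)) := by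
  have hpi := Real.pi_pos
  apply strictMonoOn_of_deriv_pos (convex_Ioc _ _)
  · apply ContinuousOn.div (by fun_prop) (by fun_prop)
    intro x hx; exact (sin2x_pos hx).ne'
  · intro x hx
    rw [interior_Ioc] at hx
    have hx' : x ∈ Set.Ioc 0 (π / 3) := ⟨hx.1, hx.2.le⟩
    have hs := sin2x_pos hx'
    rw [(phi_deriv hs.ne').deriv]
    have hk : 0 < hfun (2 * x) := key ⟨by linarith [hx.1], by linarith [hx.2]⟩
    have hpyth := Real.sin_sq_add_cos_sq (2 * x)
    have hnum : 0 < (2 * (2 + Real.cos (2 * x)) + 2 * x * (-Real.sin (2 * x) * 2)) * Real.sin (2 * x)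
        - 2 * x * (2 + Real.cos (2 * x)) * (Real.cos (2 * x) * 2) := by
      have heq : (2 * (2 + Real.cos (2 * x)) + 2 * x * (-Real.sin (2 * x) * 2)) * Real.sin (2 * x)
          - 2 * x * (2 + Real.cos (2 * x)) * (Real.cos (2 * x) * 2) = 2 * hfun (2 * x) := by
        unfold hfun; linear_combination (-4 * x) * hpyth
      linarith
    positivity

lemma g_eq_phi {x : ℝ} (hc : 0 < Real.cos x) (hs : 0 < Real.sin x) :
    x * (3 + Real.tan x ^ 2) / Real.tan x = phi x := by
  unfold phi
  rw [Real.tan_eq_sin_div_cos, Real.cos_two_mul, Real.sin_two_mul]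
  have hpyth := Real.sin_sq_add_cos_sq x
  field_simp
  linear_combination x * hpyth

lemma tan_div_lim : Tendsto (fun x : ℝ => Real.tan x / x) (𝓝[>] 0) (𝓝 1) := by
  have h : HasDerivAt Real.tan 1 0 := by
    have := Real.hasDerivAt_tan (by simp : Real.cos 0 ≠ 0)
    simpa using this
  have := hasDerivAt_iff_tendsto_slope.mp h
  apply Tendsto.congr' _ (this.mono_left (nhdsWithin_mono _ (by intro x hx; exact ne_of_gt hx)))
  filter_upwards [self_mem_nhdsWithin] with x hx
  simp [slope, Real.tan_zero, div_eq_inv_mul]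

/-- The function `g(x) = x (3 + tan² x) / tan x` is strictly increasing on `(0, π/3]`
and tends to `3` as `x → 0⁺`. -/
theorem stmt_3 (g : ℝ → ℝ) (hg : ∀ x, g x = x * (3 + tan x ^ 2) / tan x) :
    StrictMonoOn g (Set.Ioc 0 (π / 3)) ∧ Tendsto g (𝓝[>] 0) (𝓝 3) := by
  have hpi := Real.pi_pos
  constructor
  · apply phi_mono.congr
    intro x hx
    have hc : 0 < Real.cos x := Real.cos_pos_of_mem_Ioo ⟨by linarith [hx.1], by linarith [hx.2]⟩
    have hs : 0 < Real.sin x := Real.sin_pos_of_pos_of_lt_pi hx.1 (by linarith [hx.2])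
    rw [hg x, g_eq_phi hc hs]
  · have hinv : Tendsto (fun x : ℝ => x / Real.tan x) (𝓝[>] 0) (𝓝 1) := by
      simpa only [inv_div, inv_one] using tan_div_lim.inv₀ one_ne_zero
    have hxt : Tendsto (fun x : ℝ => x * Real.tan x) (𝓝[>] 0) (𝓝 0) := by
      have hca : ContinuousAt (fun x : ℝ => x * Real.tan x) 0 :=
        continuousAt_id.mul (Real.continuousAt_tan.mpr (by simp))
      have h0 : Tendsto (fun x : ℝ => x * Real.tan x) (𝓝[>] 0) (𝓝 (0 * Real.tan 0)) :=
        hca.tendsto.mono_left nhdsWithin_le_nhds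
      simpa using h0
    have hcomb : Tendsto (fun x : ℝ => 3 * (x / Real.tan x) + x * Real.tan x) (𝓝[>] 0)
        (𝓝 (3 * 1 + 0)) := (hinv.const_mul 3).add hxt
    norm_num at hcomb
    apply Tendsto.congr' _ hcomb
    filter_upwards [Ioo_mem_nhdsGT_of_mem (Set.mem_Ico.mpr ⟨le_refl 0, by positivity⟩ :
      (0:ℝ) ∈ Set.Ico 0 (π / 2))] with x hx
    have ht : 0 < Real.tan x := Real.tan_pos_of_pos_of_lt_pi_div_two hx.1 hx.2
    rw [hg x]
    field_simp
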